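/- arXiv:2601.15214 — 2 statements merged into one kernel-verified Lean document; each statement's English description precedes it below -/
import Mathlib

section
/- Let e₁ and e₂ be REwLA terms over the set A of term variables, let V be the finite set of term variables occurring in e₁ or e₂, and let end := (Σ_{a∈V} a)ᵃ. Then L(e₁) = L(e₂) if and only if the equation e₁;end = e₂;end is valid on the class of word structures, i.e., for every string w ∈ A*, ⟦e₁;end⟧^{S^w} = ⟦e₂;end⟧^{S^w}. -/
/-! Statement 0: language equivalence of REwLA terms coincides with validity of
`e₁;end = e₂;end` on the class of word structures. -/

/-- Regular expressions with lookahead (REwLA). -/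
inductive RE (A : Type) : Type where
  | var : A → RE A
  | one : RE A
  | zero : RE A
  | comp : RE A → RE A → RE A
  | union : RE A → RE A → RE A
  | plus : RE A → RE A
  | adom : RE A → RE A

/-- Relational semantics of REwLA terms, given an interpretation `ρ` of term variables. -/
def reSem {A W : Type} (ρ : A → W → W → Prop) : RE A → W → W → Prop
  | .var a => ρ a
  | .one => fun x y => x = y
  | .zero => fun _ _ => False
  | .comp e f => fun x z => ∃ y, reSem ρ e x y ∧ reSem ρ f y z
  | .union e f => fun x y => reSem ρ e x y ∨ reSem ρ f x y
  | .plus e => fun x y => Relation.TransGen (fun u v => reSem ρ e u v) x y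
  | .adom e => fun x y => x = y ∧ ∀ z, ¬ reSem ρ e x z

/-- Interpretation of term variables in the word structure `S^w`. -/
def wordRel {A : Type} (w : List A) (a : A) (i j : Fin (w.length + 1)) : Prop :=
  (j : ℕ) = (i : ℕ) + 1 ∧ w[(i : ℕ)]? = some a

/-- Semantics of an REwLA term on the word structure `S^w`. -/
def wordSem {A : Type} (w : List A) (e : RE A) :
    Fin (w.length + 1) → Fin (w.length + 1) → Prop :=
  reSem (wordRel w) e

/-- The language of an REwLA term. -/
def reLang {A : Type} (e : RE A) : Set (List A) :=
  {w | wordSem w e 0 (Fin.last w.length)}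

/-- The list of term variables occurring in a term. -/
def reVars {A : Type} : RE A → List A
  | .var a => [a]
  | .one => []
  | .zero => []
  | .comp e f => reVars e ++ reVars f
  | .union e f => reVars e ++ reVars f
  | .plus e => reVars e
  | .adom e => reVars e

/-- The sum (finite union) `0 + a₁ + ⋯ + aₖ` of a list of term variables. -/
def sumVars {A : Type} (l : List A) : RE A :=
  l.foldr (fun a t => RE.union (RE.var a) t) RE.zero

namespace REwLAproof

variable {A : Type}

/-- ℕ-indexed interpretation of term variables of a word. -/
def natRel (w : List A) (a : A) (i j : ℕ) : Prop :=
  j = i + 1 ∧ w[i]? = some a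

/-- Forward-only: the semantics only moves right. -/
lemma natSem_le {w : List A} {e : RE A} :
    ∀ {x y : ℕ}, reSem (natRel w) e x y → x ≤ y := by
  induction e with
  | var a => intro x y h; obtain ⟨h1, -⟩ := h; omega
  | one => intro x y h; simp only [reSem] at h; omega
  | zero => intro x y h; simp only [reSem] at h
  | comp e f ihe ihf =>
      intro x y h; obtain ⟨m, h1, h2⟩ := h
      exact le_trans (ihe h1) (ihf h2)
  | union e f ihe ihf =>
      intro x y h; rcases h with h | h
      · exact ihe h
      · exact ihf h
  | plus e ih =>
      intro x y h
      induction h with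
      | single hs => exact ih hs
      | tail _ hs ihr => exact le_trans ihr (ih hs)
  | adom e ih =>
      intro x y h; obtain ⟨h1, -⟩ := h; omega

/-- Ceiling: if position `j` is blocked for all variables of `e`, the semantics
cannot move past `j`. -/
lemma natSem_ceil {w : List A} {V : List A} {j : ℕ}
    (hblk : ∀ a ∈ V, w[j]? ≠ some a) {e : RE A}
    (hsub : ∀ a ∈ reVars e, a ∈ V) :
    ∀ {x y : ℕ}, x ≤ j → reSem (natRel w) e x y → y ≤ j := by
  induction e with
  | var a =>
      intro x y hx h; obtain ⟨h1, h2⟩ := h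
      rcases Nat.lt_or_ge x j with hlt | hge
      · omega
      · have hxj : x = j := by omega
        subst hxj
        exact absurd h2 (hblk a (hsub a (by simp [reVars])))
  | one => intro x y hx h; simp only [reSem] at h; omega
  | zero => intro x y hx h; exact h.elim
  | comp e f ihe ihf =>
      intro x y hx h; obtain ⟨m, h1, h2⟩ := h
      have hsube : ∀ a ∈ reVars e, a ∈ V := fun a ha =>
        hsub a (by simp [reVars, ha])
      have hsubf : ∀ a ∈ reVars f, a ∈ V := fun a ha =>
        hsub a (by simp [reVars, ha])
      exact ihf hsubf (ihe hsube hx h1) h2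
  | union e f ihe ihf =>
      intro x y hx h
      have hsube : ∀ a ∈ reVars e, a ∈ V := fun a ha =>
        hsub a (by simp [reVars, ha])
      have hsubf : ∀ a ∈ reVars f, a ∈ V := fun a ha =>
        hsub a (by simp [reVars, ha])
      rcases h with h | h
      · exact ihe hsube hx h
      · exact ihf hsubf hx h
  | plus e ih =>
      intro x y hx h
      induction h with
      | single hs => exact ih hsub hx hs
      | tail _ hs ihr => exact ih hsub ihr hs
  | adom e ih =>
      intro x y hx h; obtain ⟨h1, -⟩ := h; omega

/-- Bound: the semantics stays within the word. -/
lemma natSem_le_length {w : List A} {e : RE A} {x y : ℕ}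
    (hx : x ≤ w.length) (h : reSem (natRel w) e x y) : y ≤ w.length := by
  refine natSem_ceil (V := reVars e) (j := w.length) ?_ (fun a ha => ha) hx h
  intro a _
  simp [List.getElem?_eq_none (le_refl w.length)]

/-- Transfer between the `Fin`-indexed and the `ℕ`-indexed semantics. -/
lemma wordSem_iff_natSem {w : List A} {e : RE A} :
    ∀ (x y : Fin (w.length + 1)),
      reSem (wordRel w) e x y ↔ reSem (natRel w) e (x : ℕ) (y : ℕ) := by
  induction e with
  | var a => intro x y; simp only [reSem, wordRel, natRel]
  | one =>
      intro x y; simp only [reSem, Fin.ext_iff]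
  | zero => intro x y; simp only [reSem]
  | comp e f ihe ihf =>
      intro x y
      constructor
      · rintro ⟨m, h1, h2⟩
        exact ⟨(m : ℕ), (ihe x m).mp h1, (ihf m y).mp h2⟩
      · rintro ⟨m, h1, h2⟩
        have hm : m ≤ w.length :=
          natSem_le_length (Nat.lt_succ_iff.mp x.isLt) h1
        refine ⟨⟨m, Nat.lt_succ_of_le hm⟩, ?_, ?_⟩
        · exact (ihe x ⟨m, Nat.lt_succ_of_le hm⟩).mpr h1
        · exact (ihf ⟨m, Nat.lt_succ_of_le hm⟩ y).mpr h2
  | union e f ihe ihf =>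
      intro x y
      constructor
      · rintro (h | h)
        · exact Or.inl ((ihe x y).mp h)
        · exact Or.inr ((ihf x y).mp h)
      · rintro (h | h)
        · exact Or.inl ((ihe x y).mpr h)
        · exact Or.inr ((ihf x y).mpr h)
  | plus e ih =>
      intro x y
      constructor
      · intro h
        induction h with
        | single hs => exact Relation.TransGen.single ((ih _ _).mp hs)
        | tail _ hs ihr => exact Relation.TransGen.tail ihr ((ih _ _).mp hs)
      · intro h
        have aux : ∀ Y : ℕ,
            Relation.TransGen (fun u v => reSem (natRel w) e u v) (x : ℕ) Y →
            ∀ hY : Y ≤ w.length,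
              Relation.TransGen (fun u v => reSem (wordRel w) e u v) x
                ⟨Y, Nat.lt_succ_of_le hY⟩ := by
          intro Y hT
          induction hT with
          | single hs =>
              intro hY
              exact Relation.TransGen.single ((ih x ⟨_, Nat.lt_succ_of_le hY⟩).mpr hs)
          | @tail b c hT hs ihr =>
              intro hY
              have hb : b ≤ w.length := le_trans (natSem_le hs) hY
              exact Relation.TransGen.tail (ihr hb)
                ((ih ⟨b, Nat.lt_succ_of_le hb⟩ ⟨c, Nat.lt_succ_of_le hY⟩).mpr hs)
        have := aux (y : ℕ) h (Nat.lt_succ_iff.mp y.isLt)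
        simpa [reSem] using this
  | adom e ih =>
      intro x y
      simp only [reSem, Fin.ext_iff]
      constructor
      · rintro ⟨h1, h2⟩
        refine ⟨h1, fun z hz => ?_⟩
        have hzl : z ≤ w.length :=
          natSem_le_length (Nat.lt_succ_iff.mp x.isLt) hz
        exact h2 ⟨z, Nat.lt_succ_of_le hzl⟩ ((ih x ⟨z, Nat.lt_succ_of_le hzl⟩).mpr hz)
      · rintro ⟨h1, h2⟩
        exact ⟨h1, fun z hz => h2 (z : ℕ) ((ih x z).mp hz)⟩

/-- Shift lemma: the semantics on `w` between positions `i+x` and `i+y` (with a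
blocked endpoint `i+n`) agrees with the semantics on the extracted subword `u`. -/
lemma shift_iff {w u : List A} {V : List A} {i n : ℕ}
    (hget : ∀ x, x < n → u[x]? = w[i + x]?)
    (hun : ∀ a ∈ V, u[n]? ≠ some a)
    (hwn : ∀ a ∈ V, w[i + n]? ≠ some a) :
    ∀ {e : RE A}, (∀ a ∈ reVars e, a ∈ V) →
      ∀ {x y : ℕ}, x ≤ n →
        (reSem (natRel u) e x y ↔ reSem (natRel w) e (i + x) (i + y)) := by
  intro e
  induction e with
  | var a =>
      intro hsub x y hx
      have ha : a ∈ V := hsub a (by simp [reVars])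
      rcases Nat.lt_or_ge x n with hlt | hge
      · show (y = x + 1 ∧ _) ↔ (i + y = i + x + 1 ∧ _)
        rw [hget x hlt]
        constructor
        · rintro ⟨h1, h2⟩; exact ⟨by omega, h2⟩
        · rintro ⟨h1, h2⟩; exact ⟨by omega, h2⟩
      · have hxn : x = n := by omega
        subst hxn
        constructor
        · rintro ⟨-, h2⟩; exact absurd h2 (hun a ha)
        · rintro ⟨-, h2⟩; exact absurd h2 (hwn a ha)
  | one =>
      intro hsub x y hx
      simp only [reSem]; omega
  | zero => intro hsub x y hx; simp only [reSem]
  | comp e f ihe ihf =>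
      intro hsub x y hx
      have hsube : ∀ a ∈ reVars e, a ∈ V := fun a ha => hsub a (by simp [reVars, ha])
      have hsubf : ∀ a ∈ reVars f, a ∈ V := fun a ha => hsub a (by simp [reVars, ha])
      constructor
      · rintro ⟨m, h1, h2⟩
        have hm : m ≤ n := natSem_ceil hun hsube hx h1
        exact ⟨i + m, (ihe hsube hx).mp h1, (ihf hsubf hm).mp h2⟩
      · rintro ⟨M, h1, h2⟩
        have hM1 : i + x ≤ M := natSem_le h1
        have hM2 : M ≤ i + n := by
          have hwn' : ∀ a ∈ V, w[i + n]? ≠ some a := hwn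
          exact natSem_ceil hwn' hsube (by omega) h1
        have hMeq : M = i + (M - i) := by omega
        have hm : M - i ≤ n := by omega
        refine ⟨M - i, (ihe hsube hx).mpr (hMeq ▸ h1), (ihf hsubf hm).mpr ?_⟩
        rw [← hMeq]; exact h2
  | union e f ihe ihf =>
      intro hsub x y hx
      have hsube : ∀ a ∈ reVars e, a ∈ V := fun a ha => hsub a (by simp [reVars, ha])
      have hsubf : ∀ a ∈ reVars f, a ∈ V := fun a ha => hsub a (by simp [reVars, ha])
      constructor
      · rintro (h | h)
        · exact Or.inl ((ihe hsube hx).mp h)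
        · exact Or.inr ((ihf hsubf hx).mp h)
      · rintro (h | h)
        · exact Or.inl ((ihe hsube hx).mpr h)
        · exact Or.inr ((ihf hsubf hx).mpr h)
  | plus e ih =>
      intro hsub x y hx
      constructor
      · intro h
        have aux : ∀ Y, Relation.TransGen (fun a b => reSem (natRel u) e a b) x Y →
            Y ≤ n ∧ Relation.TransGen (fun a b => reSem (natRel w) e a b) (i + x) (i + Y) := by
          intro Y hT
          induction hT with
          | single hs =>
              exact ⟨natSem_ceil (e := e) hun hsub hx hs,
                Relation.TransGen.single ((ih hsub hx).mp hs)⟩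
          | @tail b c hT hs ihr =>
              obtain ⟨hb, hTw⟩ := ihr
              exact ⟨natSem_ceil (e := e) hun hsub hb hs,
                Relation.TransGen.tail hTw ((ih hsub hb).mp hs)⟩
        exact (aux y h).2
      · intro h
        have aux : ∀ Y, Relation.TransGen (fun a b => reSem (natRel w) e a b) (i + x) Y →
            ∃ m, Y = i + m ∧ m ≤ n ∧
              Relation.TransGen (fun a b => reSem (natRel u) e a b) x m := by
          intro Y hT
          induction hT with
          | @single b hs =>
              have h1 : i + x ≤ b := natSem_le hs
              have h2 : b ≤ i + n := natSem_ceil (e := e) hwn hsub (by omega) hs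
              refine ⟨b - i, by omega, by omega, Relation.TransGen.single ?_⟩
              refine (ih hsub hx).mpr ?_
              have hb : b = i + (b - i) := by omega
              rw [← hb]; exact hs
          | @tail b c hT hs ihr =>
              obtain ⟨m, rfl, hm, hTu⟩ := ihr
              have h1 : i + m ≤ c := natSem_le hs
              have h2 : c ≤ i + n := natSem_ceil (e := e) hwn hsub (by omega) hs
              refine ⟨c - i, by omega, by omega, Relation.TransGen.tail hTu ?_⟩
              refine (ih hsub hm).mpr ?_
              have hc : c = i + (c - i) := by omega
              rw [← hc]; exact hs
        obtain ⟨m, heq, hm, hTu⟩ := aux (i + y) h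
        have : m = y := by omega
        subst this
        exact hTu
  | adom e ih =>
      intro hsub x y hx
      simp only [reSem]
      constructor
      · rintro ⟨h1, h2⟩
        refine ⟨by omega, fun Z hZ => ?_⟩
        have hZ1 : i + x ≤ Z := natSem_le hZ
        have hZ2 : Z ≤ i + n := natSem_ceil (e := e) hwn hsub (by omega) hZ
        have hZeq : Z = i + (Z - i) := by omega
        exact h2 (Z - i) ((ih hsub hx).mpr (hZeq ▸ hZ))
      · rintro ⟨h1, h2⟩
        refine ⟨by omega, fun z hz => ?_⟩
        exact h2 (i + z) ((ih hsub hx).mp hz)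

/-- Semantics of `sumVars`. -/
lemma sumVars_sem {W : Type} (ρ : A → W → W → Prop) (l : List A) (x y : W) :
    reSem ρ (sumVars l) x y ↔ ∃ a ∈ l, ρ a x y := by
  induction l with
  | nil => simp [sumVars, reSem]
  | cons a l ih =>
      show reSem ρ (RE.union (RE.var a) (sumVars l)) x y ↔ _
      simp only [reSem, ih, List.mem_cons]
      constructor
      · rintro (h | ⟨b, hb, h⟩)
        · exact ⟨a, Or.inl rfl, h⟩
        · exact ⟨b, Or.inr hb, h⟩
      · rintro ⟨b, hb | hb, h⟩
        · exact Or.inl (hb ▸ h)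
        · exact Or.inr ⟨b, hb, h⟩

/-- Semantics of the end-marker `(Σ_{a∈V} a)ᵃ` on a word structure. -/
lemma end_sem {w : List A} (V : List A) (x y : Fin (w.length + 1)) :
    reSem (wordRel w) (RE.adom (sumVars V)) x y ↔
      x = y ∧ ∀ a ∈ V, w[(x : ℕ)]? ≠ some a := by
  show (x = y ∧ ∀ z, ¬ reSem (wordRel w) (sumVars V) x z) ↔ _
  constructor
  · rintro ⟨h1, h2⟩
    refine ⟨h1, fun a ha hsome => ?_⟩
    have hlt : (x : ℕ) < w.length := by
      by_contra hge
      rw [List.getElem?_eq_none (by omega)] at hsome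
      exact Option.some_ne_none _ hsome.symm
    refine h2 ⟨(x : ℕ) + 1, by omega⟩ ?_
    exact (sumVars_sem _ V _ _).mpr ⟨a, ha, rfl, hsome⟩
  · rintro ⟨h1, h2⟩
    refine ⟨h1, fun z hz => ?_⟩
    obtain ⟨a, ha, -, hsome⟩ := (sumVars_sem _ V _ _).mp hz
    exact h2 a ha hsome

/-- Membership in the language via the ℕ-semantics. -/
lemma mem_reLang_iff {w : List A} {e : RE A} :
    w ∈ reLang e ↔ reSem (natRel w) e 0 w.length := by
  show wordSem w e 0 (Fin.last w.length) ↔ _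
  rw [wordSem, wordSem_iff_natSem]
  simp [Fin.last]

/-- One half of the hard direction. -/
lemma half {e₁ e₂ : RE A} {V : List A}
    (h1 : ∀ a ∈ reVars e₁, a ∈ V) (h2 : ∀ a ∈ reVars e₂, a ∈ V)
    (hlang : reLang e₁ ⊆ reLang e₂) (w : List A) (i j : Fin (w.length + 1))
    (h : wordSem w (RE.comp e₁ (RE.adom (sumVars V))) i j) :
    wordSem w (RE.comp e₂ (RE.adom (sumVars V))) i j := by
  obtain ⟨m, he, hendm⟩ := h
  rw [end_sem] at hendm
  obtain ⟨rfl, hblkF⟩ := hendm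
  -- now `he : reSem (wordRel w) e₁ i m`, `hblkF : ∀ a ∈ V, w[(m:ℕ)]? ≠ some a`
  have heN : reSem (natRel w) e₁ (i : ℕ) (m : ℕ) := (wordSem_iff_natSem i m).mp he
  have hij : (i : ℕ) ≤ (m : ℕ) := natSem_le heN
  set n : ℕ := (m : ℕ) - (i : ℕ) with hn
  set u : List A := (w.drop (i : ℕ)).take n with hu
  have hulen : u.length = n := by
    simp only [hu, List.length_take, List.length_drop]
    have := Nat.lt_succ_iff.mp m.isLt
    omega
  have hget : ∀ x, x < n → u[x]? = w[(i : ℕ) + x]? := by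
    intro x hx
    rw [hu, List.getElem?_take, if_pos hx, List.getElem?_drop]
  have hun : ∀ a ∈ V, u[n]? ≠ some a := by
    intro a _
    rw [List.getElem?_eq_none (le_of_eq hulen)]
    exact fun h => Option.some_ne_none _ h.symm
  have hwn : ∀ a ∈ V, w[(i : ℕ) + n]? ≠ some a := by
    intro a ha
    have : (i : ℕ) + n = (m : ℕ) := by omega
    rw [this]
    exact hblkF a ha
  have hfix : (i : ℕ) + n = (m : ℕ) := by omega
  -- transfer e₁ to the subword u
  have hu1 : reSem (natRel u) e₁ 0 n := by
    have := (shift_iff hget hun hwn h1 (x := 0) (y := n) (Nat.zero_le n)).mpr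
    apply this
    rw [Nat.add_zero, hfix]
    exact heN
  -- u ∈ L(e₁) ⊆ L(e₂)
  have humem : u ∈ reLang e₂ := by
    apply hlang
    rw [mem_reLang_iff, hulen]
    exact hu1
  have hu2 : reSem (natRel u) e₂ 0 n := by
    rw [mem_reLang_iff, hulen] at humem
    exact humem
  -- transfer e₂ back to w
  have he2N : reSem (natRel w) e₂ (i : ℕ) (m : ℕ) := by
    have := (shift_iff hget hun hwn h2 (x := 0) (y := n) (Nat.zero_le n)).mp hu2
    rwa [Nat.add_zero, hfix] at this
  refine ⟨m, (wordSem_iff_natSem i m).mpr he2N, ?_⟩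
  rw [end_sem]
  exact ⟨rfl, hblkF⟩

end REwLAproof

theorem language_equiv_iff_valid_on_word_structures
    {A : Type} [DecidableEq A] (e₁ e₂ : RE A)
    (endT : RE A)
    (hend : endT = RE.adom (sumVars ((reVars e₁ ++ reVars e₂).dedup))) :
    reLang e₁ = reLang e₂ ↔
      ∀ (w : List A) (i j : Fin (w.length + 1)),
        wordSem w (RE.comp e₁ endT) i j ↔ wordSem w (RE.comp e₂ endT) i j := by
  subst hend
  set V := (reVars e₁ ++ reVars e₂).dedup with hV
  have h1 : ∀ a ∈ reVars e₁, a ∈ V := by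
    intro a ha; rw [hV, List.mem_dedup]; exact List.mem_append.mpr (Or.inl ha)
  have h2 : ∀ a ∈ reVars e₂, a ∈ V := by
    intro a ha; rw [hV, List.mem_dedup]; exact List.mem_append.mpr (Or.inr ha)
  constructor
  · intro hlang w i j
    constructor
    · exact REwLAproof.half h1 h2 (fun _ hx => hlang ▸ hx) w i j
    · exact REwLAproof.half h2 h1 (fun _ hx => hlang ▸ hx) w i j
  · intro hvalid
    ext w
    simp only [reLang, Set.mem_setOf_eq]
    constructor
    · intro h
      have hcomp : wordSem w (RE.comp e₁ (RE.adom (sumVars V))) 0 (Fin.last w.length) := by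
        refine ⟨Fin.last w.length, h, ?_⟩
        rw [REwLAproof.end_sem]
        refine ⟨rfl, fun a _ => ?_⟩
        rw [Fin.val_last, List.getElem?_eq_none (le_refl _)]
        exact fun hc => Option.some_ne_none _ hc.symm
      obtain ⟨m, h2', hendm⟩ := (hvalid w 0 (Fin.last w.length)).mp hcomp
      rw [REwLAproof.end_sem] at hendm
      obtain ⟨heq, -⟩ := hendm
      rw [heq] at h2'
      exact h2'
    · intro h
      have hcomp : wordSem w (RE.comp e₂ (RE.adom (sumVars V))) 0 (Fin.last w.length) := by
        refine ⟨Fin.last w.length, h, ?_⟩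
        rw [REwLAproof.end_sem]
        refine ⟨rfl, fun a _ => ?_⟩
        rw [Fin.val_last, List.getElem?_eq_none (le_refl _)]
        exact fun hc => Option.some_ne_none _ hc.symm
      obtain ⟨m, h2', hendm⟩ := (hvalid w 0 (Fin.last w.length)).mpr hcomp
      rw [REwLAproof.end_sem] at hendm
      obtain ⟨heq, -⟩ := hendm
      rw [heq] at h2'
      exact h2'
end

section
/- Let e₁ and e₂ be REwLA terms over the set A of term variables. Then SML(e₁) = SML(e₂) if and only if the equation e₁ = e₂ is valid on GRELfinlin, i.e., ⟦e₁⟧ˢ = ⟦e₂⟧ˢ for every generalized structure S whose universal relation is a finite linear order. -/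
/-! Statement 1: equivalence of match-languages with substitutions coincides with
validity of the equation `e₁ = e₂` on GRELfinlin. -/

/-- A generalized structure over term variables `A` and formula variables `P`,
with universe `W`. -/
structure GStruct (A P W : Type) where
  U : W → W → Prop
  rel : A → W → W → Prop
  rel_sub : ∀ a x y, rel a x y → U x y
  val : P → W → Prop

/-- The universal relation is a finite linear order (on a nonempty finite universe). -/
def FinLin {A P W : Type} (S : GStruct A P W) : Prop :=
  Nonempty W ∧ Finite W ∧ (∀ x, S.U x x) ∧
    (∀ x y z, S.U x y → S.U y z → S.U x z) ∧
    (∀ x y, S.U x y → S.U y x → x = y) ∧ (∀ x y, S.U x y ∨ S.U y x)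

/-- Applying a substitution (of terms for term variables) to a term. -/
def reSubst {A : Type} (θ : A → RE A) : RE A → RE A
  | .var a => θ a
  | .one => .one
  | .zero => .zero
  | .comp e f => .comp (reSubst θ e) (reSubst θ f)
  | .union e f => .union (reSubst θ e) (reSubst θ f)
  | .plus e => .plus (reSubst θ e)
  | .adom e => .adom (reSubst θ e)

/-- The match-language `ML(e) = {(w,i,j) : (i,j) ∈ ⟦e⟧^{S^w}}`. -/
def ML {A : Type} (e : RE A) : Set (List A × ℕ × ℕ) :=
  {x | ∃ (hi : x.2.1 < x.1.length + 1) (hj : x.2.2 < x.1.length + 1),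
    wordSem x.1 e ⟨x.2.1, hi⟩ ⟨x.2.2, hj⟩}

/-- The match-language with substitutions `SML(e) = ⋃_θ {θ} × ML(eθ)`. -/
def SML {A : Type} (e : RE A) : Set ((A → RE A) × (List A × ℕ × ℕ)) :=
  {q | q.2 ∈ ML (reSubst q.1 e)}

namespace SMLAux

lemma reSem_subst {A W : Type} (ρ : A → W → W → Prop) (θ : A → RE A) (e : RE A) :
    reSem ρ (reSubst θ e) = reSem (fun a => reSem ρ (θ a)) e := by
  induction e with
  | var a => rfl
  | one => rfl
  | zero => rfl
  | comp e f ihe ihf => funext x y; simp [reSem, reSubst, ihe, ihf]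
  | union e f ihe ihf => funext x y; simp [reSem, reSubst, ihe, ihf]
  | plus e ih => funext x y; simp [reSem, reSubst, ih]
  | adom e ih => funext x y; simp [reSem, reSubst, ih]

lemma reSem_sub {A W : Type} {U : W → W → Prop} (hrefl : ∀ x, U x x)
    (htrans : ∀ x y z, U x y → U y z → U x z) {ρ : A → W → W → Prop}
    (hρ : ∀ a x y, ρ a x y → U x y) (e : RE A) :
    ∀ x y, reSem ρ e x y → U x y := by
  induction e with
  | var a => exact fun x y h => hρ a x y h
  | one => rintro x y rfl; exact hrefl x
  | zero => rintro x y ⟨⟩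
  | comp e f ihe ihf => rintro x y ⟨z, h1, h2⟩; exact htrans _ _ _ (ihe _ _ h1) (ihf _ _ h2)
  | union e f ihe ihf => rintro x y (h | h); exacts [ihe _ _ h, ihf _ _ h]
  | plus e ih =>
    intro x y h
    induction h with
    | single h => exact ih _ _ h
    | tail _ h ih2 => exact htrans _ _ _ ih2 (ih _ _ h)
  | adom e ih => rintro x y ⟨rfl, -⟩; exact hrefl x

lemma reSem_equiv {A W V : Type} (φ : V ≃ W) (ρ : A → W → W → Prop) (e : RE A) :
    ∀ u v : V, reSem (fun a p q => ρ a (φ p) (φ q)) e u v ↔ reSem ρ e (φ u) (φ v) := by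
  induction e with
  | var a => intro u v; rfl
  | one => intro u v; simp [reSem, φ.injective.eq_iff]
  | zero => intro u v; simp [reSem]
  | comp e f ihe ihf =>
    intro u v
    simp only [reSem]
    constructor
    · rintro ⟨z, h1, h2⟩; exact ⟨φ z, (ihe _ _).1 h1, (ihf _ _).1 h2⟩
    · rintro ⟨z, h1, h2⟩
      refine ⟨φ.symm z, (ihe _ _).2 ?_, (ihf _ _).2 ?_⟩ <;> simp [h1, h2]
  | union e f ihe ihf => intro u v; simp [reSem, ihe, ihf]
  | plus e ih =>
    intro u v
    simp only [reSem]
    constructor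
    · intro h
      exact Relation.TransGen.lift φ (fun a b hab => (ih a b).1 hab) _ _ h
    · intro h
      have := Relation.TransGen.lift φ.symm
        (fun a b hab => (ih (φ.symm a) (φ.symm b)).2 (by simpa using hab)) _ _ h
      simpa [Function.onFun] using this
  | adom e ih =>
    intro u v
    simp only [reSem, φ.injective.eq_iff]
    constructor
    · rintro ⟨rfl, h⟩; exact ⟨rfl, fun z hz => h (φ.symm z) ((ih _ _).2 (by simpa using hz))⟩
    · rintro ⟨rfl, h⟩; exact ⟨rfl, fun z hz => h (φ z) ((ih _ _).1 hz)⟩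

/-- Boolean value of a term over an empty variable set. -/
def B {A : Type} : RE A → Prop
  | .var _ => True
  | .one => True
  | .zero => False
  | .comp e f => B e ∧ B f
  | .union e f => B e ∨ B f
  | .plus e => B e
  | .adom e => ¬ B e

lemma reSem_empty {A W : Type} [IsEmpty A] (ρ : A → W → W → Prop) (e : RE A) :
    ∀ x y : W, reSem ρ e x y ↔ (x = y ∧ B e) := by
  induction e with
  | var a => exact isEmptyElim a
  | one => intro x y; simp [reSem, B]
  | zero => intro x y; simp [reSem, B]
  | comp e f ihe ihf =>
    intro x y
    simp only [reSem, B, ihe, ihf]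
    constructor
    · rintro ⟨z, ⟨rfl, h1⟩, rfl, h2⟩; exact ⟨rfl, h1, h2⟩
    · rintro ⟨rfl, h1, h2⟩; exact ⟨x, ⟨rfl, h1⟩, rfl, h2⟩
  | union e f ihe ihf => intro x y; simp [reSem, B, ihe, ihf, and_or_left]
  | plus e ih =>
    intro x y
    simp only [reSem, B]
    constructor
    · intro h
      induction h with
      | single h => exact (ih _ _).1 h
      | tail _ h ih2 =>
        obtain ⟨rfl, hb⟩ := (ih _ _).1 h
        exact ih2
    · rintro ⟨rfl, hb⟩; exact .single ((ih x x).2 ⟨rfl, hb⟩)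
  | adom e ih =>
    intro x y
    simp only [reSem, B]
    constructor
    · rintro ⟨rfl, h⟩; exact ⟨rfl, fun hb => h x ((ih x x).2 ⟨rfl, hb⟩)⟩
    · rintro ⟨rfl, h⟩; exact ⟨rfl, fun z hz => h ((ih x z).1 hz).2⟩

lemma B_subst {A : Type} [IsEmpty A] (θ : A → RE A) (e : RE A) :
    B (reSubst θ e) ↔ B e := by
  induction e with
  | var a => exact isEmptyElim a
  | one => rfl
  | zero => rfl
  | comp e f ihe ihf => simp [reSubst, B, ihe, ihf]
  | union e f ihe ihf => simp [reSubst, B, ihe, ihf]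
  | plus e ih => simp [reSubst, B, ih]
  | adom e ih => simp [reSubst, B, ih]


/-- k-fold composition of a letter. -/
def ckpow {A : Type} (c : A) : ℕ → RE A
  | 0 => .one
  | k+1 => .comp (ckpow c k) (.var c)

variable {A : Type} {w : List A} {c : A}

lemma ck_sem (hc : ∀ i, i < w.length → w[i]? = some c) (k : ℕ) :
    ∀ i j : Fin (w.length + 1),
      reSem (wordRel w) (ckpow c k) i j ↔ (j : ℕ) = (i : ℕ) + k := by
  induction k with
  | zero =>
    intro i j
    simp [ckpow, reSem, Fin.ext_iff, eq_comm]
  | succ k ih =>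
    intro i j
    simp only [ckpow, reSem, ih]
    constructor
    · rintro ⟨z, hz, hj, -⟩; omega
    · intro hj
      have hik : (i : ℕ) + k < w.length + 1 := by omega
      have hikl : (i : ℕ) + k < w.length := by
        have := j.isLt; omega
      refine ⟨⟨(i : ℕ) + k, hik⟩, rfl, ?_, ?_⟩
      · simp; omega
      · exact hc _ (by simpa using hikl)

/-- Test: current position `≤ i`. -/
def tle (c : A) (n i : ℕ) : RE A := .adom (.adom (ckpow c (n - i)))
/-- Test: current position `≥ i`. -/
def tge (c : A) (n i : ℕ) : RE A := .adom (ckpow c (n + 1 - i))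
/-- Term matching exactly the pair `(i,j)`. -/
def pairE (c : A) (n i j : ℕ) : RE A :=
  .comp (.comp (tle c n i) (tge c n i)) (ckpow c (j - i))

lemma ck_ex (hc : ∀ i, i < w.length → w[i]? = some c) (k : ℕ) (x : Fin (w.length + 1)) :
    (∃ z, reSem (wordRel w) (ckpow c k) x z) ↔ (x : ℕ) + k ≤ w.length := by
  constructor
  · rintro ⟨z, hz⟩
    rw [ck_sem hc] at hz
    have := z.isLt; omega
  · intro hxk
    exact ⟨⟨(x : ℕ) + k, by omega⟩, (ck_sem hc k _ _).2 rfl⟩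

lemma tle_sem (hc : ∀ i, i < w.length → w[i]? = some c) (i : ℕ) (hi : i ≤ w.length)
    (x y : Fin (w.length + 1)) :
    reSem (wordRel w) (tle c w.length i) x y ↔ x = y ∧ (x : ℕ) ≤ i := by
  simp only [tle, reSem]
  constructor
  · rintro ⟨rfl, h⟩
    refine ⟨rfl, ?_⟩
    by_contra hxi
    exact h x ⟨rfl, fun z hz => hxi (by
      have := (ck_sem hc (w.length - i) x z).1 hz
      have := z.isLt; omega)⟩
  · rintro ⟨rfl, hxi⟩
    refine ⟨rfl, fun z hz => ?_⟩
    obtain ⟨rfl, h⟩ := hz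
    exact h ⟨(x : ℕ) + (w.length - i), by omega⟩ ((ck_sem hc _ _ _).2 rfl)
  
lemma tge_sem (hc : ∀ i, i < w.length → w[i]? = some c) (i : ℕ) (hi : i ≤ w.length)
    (x y : Fin (w.length + 1)) :
    reSem (wordRel w) (tge c w.length i) x y ↔ x = y ∧ i ≤ (x : ℕ) := by
  simp only [tge, reSem]
  constructor
  · rintro ⟨rfl, h⟩
    refine ⟨rfl, ?_⟩
    have : ¬ ∃ z, reSem (wordRel w) (ckpow c (w.length + 1 - i)) x z := fun ⟨z, hz⟩ => h z hz
    rw [ck_ex hc] at this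
    omega
  · rintro ⟨rfl, hix⟩
    refine ⟨rfl, fun z hz => ?_⟩
    have : (∃ z, reSem (wordRel w) (ckpow c (w.length + 1 - i)) x z) := ⟨z, hz⟩
    rw [ck_ex hc] at this
    omega

lemma pairE_sem (hc : ∀ i, i < w.length → w[i]? = some c) (i j : ℕ)
    (hij : i ≤ j) (hj : j ≤ w.length) (x y : Fin (w.length + 1)) :
    reSem (wordRel w) (pairE c w.length i j) x y ↔ (x : ℕ) = i ∧ (y : ℕ) = j := by
  have hi : i ≤ w.length := le_trans hij hj
  simp only [pairE, reSem, tle_sem hc i hi, tge_sem hc i hi, ck_sem hc]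
  constructor
  · rintro ⟨z, ⟨z', ⟨rfl, h1⟩, rfl, h2⟩, h3⟩
    have hx_le : (x : ℕ) ≤ i := by
      by_contra hgt
      exact hgt h1
    have hx_ge : i ≤ (x : ℕ) := by
      by_contra hlt
      exact hlt h2
    have := y.isLt
    omega
  · rintro ⟨hx, hy⟩
    refine ⟨x, ⟨x, ⟨rfl, ?_⟩, rfl, ?_⟩, by omega⟩
    · omega
    · omega

/-- Finite union of a list of terms. -/
def bigU {A : Type} : List (RE A) → RE A
  | [] => .zero
  | e :: l => .union e (bigU l)

lemma bigU_sem {W : Type} (ρ : A → W → W → Prop) (l : List (RE A)) (x y : W) :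
    reSem ρ (bigU l) x y ↔ ∃ e ∈ l, reSem ρ e x y := by
  induction l with
  | nil => simp [bigU, reSem]
  | cons e l ih => simp [bigU, reSem, ih]

end SMLAux

open SMLAux

theorem SML_equiv_iff_valid_on_finlin {A P : Type} (e₁ e₂ : RE A) :
    SML e₁ = SML e₂ ↔
      ∀ (W : Type) (S : GStruct A P W), FinLin S →
        ∀ x y : W, reSem S.rel e₁ x y ↔ reSem S.rel e₂ x y := by
  classical
  constructor
  · -- SML equality implies validity on finite linear orders
    intro h W S hS x y
    cases isEmpty_or_nonempty A with
    | inl hE =>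
      haveI := hE
      have hmem := Set.ext_iff.mp h ⟨fun a => isEmptyElim a, [], 0, 0⟩
      simp only [SML, ML, Set.mem_setOf_eq] at hmem
      have h01 : (0 : ℕ) < ([] : List A).length + 1 := by simp
      have key : ∀ e : RE A,
          (∃ (hi : (0:ℕ) < ([] : List A).length + 1)
             (hj : (0:ℕ) < ([] : List A).length + 1),
            wordSem [] (reSubst (fun a => isEmptyElim a) e) ⟨0, hi⟩ ⟨0, hj⟩) ↔ B e := by
        intro e
        constructor
        · rintro ⟨hi, hj, hw⟩
          exact (B_subst _ e).1 ((reSem_empty _ _ _ _).1 hw).2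
        · intro hb
          exact ⟨h01, h01, (reSem_empty _ _ _ _).2 ⟨rfl, (B_subst _ e).2 hb⟩⟩
      rw [key e₁, key e₂] at hmem
      rw [reSem_empty S.rel e₁ x y, reSem_empty S.rel e₂ x y, hmem]
    | inr hA =>
      obtain ⟨c⟩ := hA
      obtain ⟨⟨w0⟩, hfin, hrefl, htrans, hanti, htot⟩ := hS
      haveI : Nonempty W := ⟨w0⟩
      haveI := hfin
      letI : Fintype W := Fintype.ofFinite W
      letI : LinearOrder W :=
        { le := S.U
          le_refl := hrefl
          le_trans := htrans
          le_antisymm := hanti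
          le_total := htot
          toDecidableLE := Classical.decRel _ }
      obtain ⟨m, hm⟩ : ∃ m, Fintype.card W = m + 1 :=
        ⟨Fintype.card W - 1, by have := Fintype.card_pos (α := W); omega⟩
      set w : List A := List.replicate m c with hw
      have hwl : w.length = m := List.length_replicate
      have hcard : Fintype.card W = w.length + 1 := by rw [hwl, hm]
      set φ : Fin (w.length + 1) ≃o W := monoEquivOfFin W hcard with hφ
      have hc : ∀ i, i < w.length → w[i]? = some c := by
        intro i hi
        rw [hw, List.getElem?_replicate, if_pos (by simpa [hwl] using hi)]
      set ρ' : A → Fin (w.length + 1) → Fin (w.length + 1) → Prop :=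
        fun a p q => S.rel a (φ p) (φ q) with hρ'
      have hρ'le : ∀ a (p q : Fin (w.length + 1)), ρ' a p q → p ≤ q := by
        intro a p q hpq
        exact φ.le_iff_le.1 (S.rel_sub _ _ _ hpq)
      set θ : A → RE A := fun a =>
        bigU (((Finset.univ.filter
          fun p : Fin (w.length + 1) × Fin (w.length + 1) => ρ' a p.1 p.2)).toList.map
            fun p => pairE c w.length p.1 p.2) with hθ
      have θ_sem : ∀ a (u v : Fin (w.length + 1)),
          reSem (wordRel w) (θ a) u v ↔ ρ' a u v := by
        intro a u v
        rw [hθ]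
        rw [bigU_sem]
        constructor
        · rintro ⟨e, he, hsem⟩
          rw [List.mem_map] at he
          obtain ⟨p, hp, rfl⟩ := he
          rw [Finset.mem_toList, Finset.mem_filter] at hp
          have hple : p.1 ≤ p.2 := hρ'le a p.1 p.2 hp.2
          rw [pairE_sem hc p.1 p.2 hple (by omega) u v] at hsem
          have hu : u = p.1 := Fin.ext hsem.1
          have hv : v = p.2 := Fin.ext hsem.2
          rw [hu, hv]; exact hp.2
        · intro huv
          refine ⟨pairE c w.length u v, ?_, ?_⟩
          · rw [List.mem_map]
            exact ⟨(u, v), by rw [Finset.mem_toList, Finset.mem_filter]; exact ⟨Finset.mem_univ _, huv⟩, rfl⟩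
          · rw [pairE_sem hc u v (hρ'le a u v huv) (by omega) u v]
            exact ⟨rfl, rfl⟩
      have hfun : (fun a => reSem (wordRel w) (θ a)) = ρ' := by
        funext a u v
        exact propext (θ_sem a u v)
      have core : ∀ (e : RE A) (u v : Fin (w.length + 1)),
          reSem (wordRel w) (reSubst θ e) u v ↔ reSem S.rel e (φ u) (φ v) := by
        intro e u v
        rw [reSem_subst, hfun]
        exact reSem_equiv φ.toEquiv S.rel e u v
      have hmem := Set.ext_iff.mp h ⟨θ, w, ((φ.symm x : Fin (w.length + 1)) : ℕ),
        ((φ.symm y : Fin (w.length + 1)) : ℕ)⟩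
      simp only [SML, ML, Set.mem_setOf_eq] at hmem
      have key : ∀ e : RE A,
          (∃ (hi : ((φ.symm x : Fin (w.length + 1)) : ℕ) < w.length + 1)
             (hj : ((φ.symm y : Fin (w.length + 1)) : ℕ) < w.length + 1),
            wordSem w (reSubst θ e) ⟨_, hi⟩ ⟨_, hj⟩) ↔ reSem S.rel e x y := by
        intro e
        constructor
        · rintro ⟨hi, hj, hsem⟩
          rw [Fin.eta, Fin.eta] at hsem
          have := (core e _ _).1 hsem
          simpa using this
        · intro he
          refine ⟨(φ.symm x).isLt, (φ.symm y).isLt, ?_⟩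
          rw [Fin.eta, Fin.eta]
          exact (core e _ _).2 (by simpa using he)
      rw [key e₁, key e₂] at hmem
      exact hmem
  · -- validity implies SML equality
    intro h
    have key : ∀ (θ : A → RE A) (w : List A),
        wordSem w (reSubst θ e₁) = wordSem w (reSubst θ e₂) := by
      intro θ w
      have hb : ∀ (a : A) (i j : Fin (w.length + 1)), wordRel w a i j → i ≤ j := by
        rintro a i j ⟨h1, -⟩
        rw [Fin.le_def]
        omega
      set Sw : GStruct A P (Fin (w.length + 1)) :=
        { U := (· ≤ ·)
          rel := fun a => reSem (wordRel w) (θ a)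
          rel_sub := fun a u v huv =>
            reSem_sub (fun z => le_refl z) (fun _ _ _ => le_trans) hb (θ a) u v huv
          val := fun _ _ => False } with hSw
      have hfl : FinLin Sw :=
        ⟨⟨0⟩, Finite.of_fintype _, fun z => le_refl z, fun _ _ _ => le_trans,
          fun _ _ => le_antisymm, le_total⟩
      have := h _ Sw hfl
      unfold wordSem
      rw [reSem_subst, reSem_subst]
      funext u v
      exact propext (this u v)
    ext ⟨θ, w, i, j⟩
    simp only [SML, ML, Set.mem_setOf_eq]
    rw [key θ w]
end
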